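/- Let p be a positive integer, σ² > 0, and let θ : (ℤ/pℤ)² → ℝ satisfy θ(0) = 0, θ(−x) = θ(x) for all x, and ‖θ‖₁ := Σ_x |θ(x)| < 1. Let Σ = σ² · (I − C(θ))⁻¹, which is a symmetric positive definite matrix indexed by (ℤ/pℤ)² × (ℤ/pℤ)². Let A be any nonempty subset of (ℤ/pℤ)² \ {0}, let Σ_{AA} denote the principal submatrix of Σ with rows and columns indexed by A, and let Σ_{A,0} denote the column vector (Σ(a, 0))_{a∈A}. Then the vector β = (Σ_{AA})⁻¹ · Σ_{A,0} (well defined since Σ_{AA} is positive definite) satisfies Σ_{a∈A} |β_a| ≤ ‖θ‖₁. -/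

import Mathlib

/-- For `θ : (ℤ/pℤ)² → ℝ`, `C(θ)` is the `p² × p²` matrix indexed by `(ℤ/pℤ)² × (ℤ/pℤ)²`
with entries `C(θ)(a,b) = θ(b - a)`. -/
def Cmat (p : ℕ) (θ : ZMod p × ZMod p → ℝ) :
    Matrix (ZMod p × ZMod p) (ZMod p × ZMod p) ℝ :=
  Matrix.of fun a b => θ (b - a)

/-- `ℓ¹`-contraction of best linear prediction coefficients for a GMRF on the torus:
for the covariance `Σ = σ² (I - C(θ))⁻¹` with `θ(0) = 0`, `θ` even and `‖θ‖₁ < 1`, and any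
nonempty set `A ⊆ (ℤ/pℤ)² \ {0}`, the coefficient vector `β = (Σ_{AA})⁻¹ Σ_{A,0}` of the
best linear prediction of coordinate `0` from the coordinates in `A` satisfies
`∑_{a ∈ A} |β_a| ≤ ‖θ‖₁`. -/
theorem stmt_15 (p : ℕ) [NeZero p] (σ2 : ℝ) (hσ2 : 0 < σ2)
    (θ : ZMod p × ZMod p → ℝ)
    (h0 : θ 0 = 0)
    (hsym : ∀ x : ZMod p × ZMod p, θ (-x) = θ x)
    (hl1 : ∑ x : ZMod p × ZMod p, |θ x| < 1)
    (Sig : Matrix (ZMod p × ZMod p) (ZMod p × ZMod p) ℝ)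
    (hSig : Sig = σ2 • (1 - Cmat p θ)⁻¹)
    (A : Finset (ZMod p × ZMod p)) (hA : A.Nonempty)
    (h0A : (0 : ZMod p × ZMod p) ∉ A)
    (β : {x // x ∈ A} → ℝ)
    (hβ : β = (Matrix.of fun a b : {x // x ∈ A} => Sig a.1 b.1)⁻¹.mulVec
      fun a : {x // x ∈ A} => Sig a.1 0) :
    ∑ a : {x // x ∈ A}, |β a| ≤ ∑ x : ZMod p × ZMod p, |θ x| := by
  classical
  set t := ∑ x : ZMod p × ZMod p, |θ x| with ht_def
  have ht0 : 0 ≤ t := Finset.sum_nonneg fun x _ => abs_nonneg _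
  have ht1 : t ≤ 1 := le_of_lt hl1
  set M : Matrix {x // x ∈ A} {x // x ∈ A} ℝ :=
    Matrix.of (fun a b : {x // x ∈ A} => Sig a.1 b.1) with hM
  by_cases hdet : IsUnit M.det
  swap
  · have hb0 : β = 0 := by
      rw [hβ, Matrix.nonsing_inv_apply_not_isUnit _ hdet, Matrix.zero_mulVec]
    rw [hb0]
    simpa using ht0
  -- main case
  have hC : IsUnit (1 - Cmat p θ).det := by
    by_contra h
    have h0' : (1 - Cmat p θ)⁻¹ = 0 := Matrix.nonsing_inv_apply_not_isUnit _ h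
    have hS0 : Sig = 0 := by rw [hSig, h0', smul_zero]
    have hM0 : M = 0 := by
      ext a b
      simp [hM, hS0]
    haveI := Finset.nonempty_coe_sort.mpr hA
    rw [hM0, Matrix.det_zero] at hdet
    simp at hdet
  set u : ZMod p × ZMod p → ℝ :=
    fun c => if c = 0 then 1 else if h : c ∈ A then -β ⟨c, h⟩ else 0 with hu_def
  set r : ZMod p × ZMod p → ℝ := Sig.mulVec u with hr_def
  have hru : (1 - Cmat p θ).mulVec r = σ2 • u := by
    rw [hr_def, hSig, Matrix.smul_mulVec, Matrix.mulVec_smul,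
      Matrix.mulVec_mulVec, Matrix.mul_nonsing_inv _ hC, Matrix.one_mulVec]
  have hkey : ∀ c, r c - ∑ d, θ (d - c) * r d = σ2 * u c := by
    have hru' : r - (Cmat p θ).mulVec r = σ2 • u := by
      have heq : (1 - Cmat p θ).mulVec r = Matrix.mulVec 1 r - (Cmat p θ).mulVec r :=
        Matrix.sub_mulVec _ _ _
      rw [heq, Matrix.one_mulVec] at hru
      exact hru
    intro c
    have h := congrFun hru' c
    simpa [Matrix.mulVec, dotProduct, Cmat, Matrix.of_apply,
      Pi.sub_apply, Pi.smul_apply, smul_eq_mul] using h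
  -- normal equations
  have hnorm : M.mulVec β = fun a : {x // x ∈ A} => Sig a.1 0 := by
    rw [hβ, Matrix.mulVec_mulVec, Matrix.mul_nonsing_inv _ hdet, Matrix.one_mulVec]
  have hrA : ∀ a ∈ A, r a = 0 := by
    intro a ha
    have h1 : r a = Sig a 0 - ∑ c ∈ A.attach, Sig a c.1 * β c := by
      rw [hr_def]
      show ∑ c, Sig a c * u c = _
      rw [← Finset.sum_subset (Finset.subset_univ (insert 0 A))
        (fun c _ hc => by
          have hc0 : c ≠ 0 := fun h => hc (by simp [h])
          have hcA : c ∉ A := fun h => hc (by simp [h])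
          simp [hu_def, hc0, hcA])]
      rw [Finset.sum_insert h0A]
      have hu0 : u 0 = 1 := by simp [hu_def]
      have h2 : ∑ c ∈ A, Sig a c * u c = ∑ c ∈ A.attach, Sig a c.1 * u c.1 :=
        (Finset.sum_attach A fun c => Sig a c * u c).symm
      rw [hu0, h2, mul_one]
      congr 1
      rw [← Finset.sum_neg_distrib]
      refine Finset.sum_congr rfl fun c _ => ?_
      have hc0 : c.1 ≠ 0 := fun h => h0A (h ▸ c.2)
      simp [hu_def, hc0, c.2, mul_comm]
    have h2 : ∑ c ∈ A.attach, Sig a c.1 * β c = Sig a 0 := by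
      have h := congrFun hnorm ⟨a, ha⟩
      simpa [Matrix.mulVec, dotProduct, hM, Finset.univ_eq_attach] using h
    rw [h1, h2, sub_self]
  -- coordinatewise consequences
  have hbeta : ∀ a : {x // x ∈ A}, σ2 * β a = ∑ d, θ (d - a.1) * r d := by
    intro a
    have h := hkey a.1
    have ha0 : a.1 ≠ 0 := fun hh => h0A (hh ▸ a.2)
    have hua : u a.1 = -β a := by simp [hu_def, ha0, a.2]
    rw [hrA a.1 a.2, hua] at h
    linarith
  have hrB : ∀ c, c ≠ 0 → c ∉ A → r c = ∑ d, θ (d - c) * r d := by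
    intro c hc0 hcA
    have h := hkey c
    have huc : u c = 0 := by simp [hu_def, hc0, hcA]
    rw [huc, mul_zero, sub_eq_zero] at h
    exact h
  have hr0 : ∑ d, θ (d - 0) * r d = r 0 - σ2 := by
    have h := hkey 0
    have hu0 : u 0 = 1 := by simp [hu_def]
    rw [hu0, mul_one] at h
    linarith
  -- majorant
  set g : ZMod p × ZMod p → ℝ := fun c => ∑ d, |θ (d - c)| * |r d| with hg_def
  have hgb : ∀ c, |∑ d, θ (d - c) * r d| ≤ g c := by
    intro c
    refine (Finset.abs_sum_le_sum_abs _ _).trans_eq ?_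
    simp [hg_def, abs_mul]
  have hg0 : ∀ c, 0 ≤ g c :=
    fun c => Finset.sum_nonneg fun d _ => mul_nonneg (abs_nonneg _) (abs_nonneg _)
  have rowsum : ∀ d : ZMod p × ZMod p, ∑ c, |θ (d - c)| = t :=
    fun d => Fintype.sum_equiv (Equiv.subLeft d) _ _ (fun c => rfl)
  have hgsum : ∑ c, g c = t * ∑ d, |r d| := by
    rw [hg_def, Finset.sum_comm, Finset.mul_sum]
    refine Finset.sum_congr rfl fun d _ => ?_
    rw [← Finset.sum_mul, rowsum d]
  -- partition of sums
  set s : Finset (ZMod p × ZMod p) := insert 0 A with hs_def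
  have hsplit : ∀ f : ZMod p × ZMod p → ℝ,
      ∑ c, f c = f 0 + ∑ c ∈ A, f c + ∑ c ∈ sᶜ, f c := by
    intro f
    rw [← Finset.sum_add_sum_compl s f, hs_def, Finset.sum_insert h0A]
  have hrsum : ∑ d, |r d| = |r 0| + ∑ c ∈ sᶜ, |r c| := by
    rw [hsplit (fun d => |r d|)]
    have : ∑ c ∈ A, |r c| = 0 := Finset.sum_eq_zero fun c hc => by rw [hrA c hc, abs_zero]
    rw [this, add_zero]
  -- bounds
  set RB := ∑ c ∈ sᶜ, |r c| with hRB_def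
  have hRB0 : 0 ≤ RB := Finset.sum_nonneg fun c _ => abs_nonneg _
  have hcomplb : RB ≤ ∑ c ∈ sᶜ, g c := by
    refine Finset.sum_le_sum fun c hc => ?_
    have hc' : c ∉ s := Finset.mem_compl.mp hc
    have hc0 : c ≠ 0 := fun h => hc' (by simp [hs_def, h])
    have hcA : c ∉ A := fun h => hc' (by simp [hs_def, h])
    rw [hrB c hc0 hcA]
    exact hgb c
  have hg0b : |r 0 - σ2| ≤ g 0 := by
    rw [← hr0]
    exact hgb 0
  have hSb : σ2 * ∑ a : {x // x ∈ A}, |β a| ≤ ∑ c ∈ A, g c := by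
    rw [Finset.mul_sum]
    have : ∑ c ∈ A, g c = ∑ c ∈ A.attach, g c.1 :=
      (Finset.sum_attach A g).symm
    rw [this, Finset.univ_eq_attach]
    refine Finset.sum_le_sum fun a _ => ?_
    calc σ2 * |β a| = |σ2 * β a| := by rw [abs_mul, abs_of_pos hσ2]
      _ = |∑ d, θ (d - a.1) * r d| := by rw [hbeta a]
      _ ≤ g a.1 := hgb a.1
  -- combine
  have htotal : g 0 + ∑ c ∈ A, g c + ∑ c ∈ sᶜ, g c = t * (|r 0| + RB) := by
    rw [← hsplit g, hgsum, hrsum]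
  have habs : |r 0| ≤ σ2 + |r 0 - σ2| := by
    have := abs_sub_abs_le_abs_sub (r 0) σ2
    rw [abs_of_pos hσ2] at this
    linarith
  have hfin : σ2 * ∑ a : {x // x ∈ A}, |β a| ≤ t * σ2 := by
    have hD0 : 0 ≤ |r 0 - σ2| := abs_nonneg _
    nlinarith [hSb, htotal, hcomplb, hg0b, habs, hRB0, ht0, ht1,
      mul_le_mul_of_nonneg_left habs ht0]
  have := (mul_le_mul_iff_right₀ hσ2).mp (by linarith [hfin] : σ2 * ∑ a : {x // x ∈ A}, |β a| ≤ σ2 * t)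
  exact this
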